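/- Level-set growth for density classes under log loss: Let 𝒫 be a finite class of probability densities with |𝒫| ≥ 2 such that |log(p(x)/q(x))| ≤ M for all p, q ∈ 𝒫 and all x ∈ 𝒳. Let μ be the counting measure on 𝒫 and let 𝒯 = {M, 2M, …, N·M} with N = ⌈12 ln|𝒫|⌉. Then the number of tolerances t ∈ 𝒯 for which μ(𝒫_{t+M}) > 2·μ(𝒫_{t−M}) is at most 3 ln|𝒫|; consequently, at least (3/4)·|𝒯| tolerances t ∈ 𝒯 satisfy both μ(𝒫_{t+M}) ≤ 2·μ(𝒫_{t−M}) and 𝒫_{t−M} ⊆ 𝒫_{t,i} ⊆ 𝒫_{t+M} for all i ∈ {1,…,n}. -/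

import Mathlib

open MeasureTheory Finset
open scoped Classical

/-- Auxiliary doubling lemma: if `d` is monotone, `d ≥ 1`, and every element `k` of a
finset `B` of naturals (all of the same parity, all positive) satisfies
`2 * d (k-1) < d (k+1)`, then `2 ^ B.card ≤ d (max B + 1)`. -/
lemma density_levelset_growth_aux (d : ℕ → ℕ)
    (hmono : ∀ j j', j ≤ j' → d j ≤ d j') (hd1 : ∀ j, 1 ≤ d j) :
    ∀ (m : ℕ) (B : Finset ℕ), B.card = m →
      (∀ k ∈ B, 1 ≤ k ∧ 2 * d (k - 1) < d (k + 1)) →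
      (∀ k ∈ B, ∀ k' ∈ B, k % 2 = k' % 2) →
      ∀ hne : B.Nonempty, 2 ^ m ≤ d (B.max' hne + 1) := by
  intro m
  induction m with
  | zero =>
    intro B hc _ _ hne
    have := Finset.card_pos.mpr hne
    omega
  | succ m ih =>
    intro B hc hbad hpar hne
    set k := B.max' hne with hk
    have hkB : k ∈ B := B.max'_mem hne
    obtain ⟨hk1, hk2⟩ := hbad k hkB
    have hcB' : (B.erase k).card = m := by
      rw [Finset.card_erase_of_mem hkB, hc]
      omega
    have key : 2 ^ m ≤ d (k - 1) := by
      rcases (B.erase k).eq_empty_or_nonempty with he | hne'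
      · have hm0 : m = 0 := by rw [← hcB', he]; rfl
        subst hm0; simpa using hd1 (k - 1)
      · have hk' := ih (B.erase k) hcB'
          (fun a ha => hbad a (Finset.mem_of_mem_erase ha))
          (fun a ha b hb => hpar a (Finset.mem_of_mem_erase ha) b (Finset.mem_of_mem_erase hb))
          hne'
        set k' := (B.erase k).max' hne' with hk'def
        have hk'B : k' ∈ B := Finset.mem_of_mem_erase ((B.erase k).max'_mem hne')
        have hk'ne : k' ≠ k := Finset.ne_of_mem_erase ((B.erase k).max'_mem hne')
        have hk'lt : k' < k := lt_of_le_of_ne (B.le_max' k' hk'B) hk'ne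
        have hp := hpar k hkB k' hk'B
        have hstep : k' + 1 ≤ k - 1 := by omega
        exact hk'.trans (hmono _ _ hstep)
    calc 2 ^ (m + 1) = 2 * 2 ^ m := by ring
      _ ≤ 2 * d (k - 1) := by omega
      _ ≤ d (k + 1) := le_of_lt hk2

/-- **Level-set growth for density classes under log loss.** -/
theorem density_levelset_growth
    {𝒳 P : Type*} [MeasurableSpace 𝒳] [Fintype P] (hP : 2 ≤ Fintype.card P)
    {n : ℕ} (x : Fin n → 𝒳)
    (ν : Measure 𝒳) (f : P → 𝒳 → ℝ)
    (hfpos : ∀ (p : P) (xx : 𝒳), 0 < f p xx)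
    (hfprob : ∀ p : P, ∫ xx, f p xx ∂ν = 1)
    (M : ℝ) (hM : ∀ (p q : P) (xx : 𝒳), |Real.log (f p xx / f q xx)| ≤ M)
    (LS : P → ℝ) (hLS : ∀ p, LS p = ∑ j, -Real.log (f p (x j)))
    (LSm : Fin n → P → ℝ)
    (hLSm : ∀ i p, LSm i p = ∑ j ∈ Finset.univ.erase i, -Real.log (f p (x j)))
    (g : P) (hg : ∀ p, LS g ≤ LS p)
    (gm : Fin n → P) (hgm : ∀ i p, LSm i (gm i) ≤ LSm i p)
    (Pt : ℝ → Finset P)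
    (hPt : ∀ s, Pt s = Finset.univ.filter fun p => LS p ≤ LS g + s)
    (Pti : ℝ → Fin n → Finset P)
    (hPti : ∀ s i, Pti s i = Finset.univ.filter fun p => LSm i p ≤ LSm i (gm i) + s)
    (N : ℕ) (hN : N = ⌈12 * Real.log (Fintype.card P)⌉₊) :
    ((((Finset.Icc 1 N).filter fun k : ℕ =>
        2 * ((Pt ((k : ℝ) * M - M)).card : ℝ) < ((Pt ((k : ℝ) * M + M)).card : ℝ)).card : ℝ)
      ≤ 3 * Real.log (Fintype.card P)) ∧
    ((3 / 4 : ℝ) * N ≤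
      (((Finset.Icc 1 N).filter fun k : ℕ =>
        ((Pt ((k : ℝ) * M + M)).card : ℝ) ≤ 2 * ((Pt ((k : ℝ) * M - M)).card : ℝ) ∧
        ∀ i : Fin n, Pt ((k : ℝ) * M - M) ⊆ Pti ((k : ℝ) * M) i ∧
          Pti ((k : ℝ) * M) i ⊆ Pt ((k : ℝ) * M + M)).card : ℝ)) := by
  classical
  have hPpos : 0 < Fintype.card P := by omega
  have hPne : Nonempty P := Fintype.card_pos_iff.mp hPpos
  obtain ⟨p0⟩ := hPne
  -- 𝒳 is nonempty (otherwise the densities could not integrate to 1)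
  have hXne : Nonempty 𝒳 := by
    by_contra h
    rw [not_nonempty_iff] at h
    have h0 : (fun xx => f p0 xx) = fun _ => (0 : ℝ) := funext fun xx => isEmptyElim xx
    have h1 := hfprob p0
    rw [h0, integral_zero] at h1
    norm_num at h1
  obtain ⟨x0⟩ := hXne
  have hM0 : 0 ≤ M := by
    have h := hM p0 p0 x0
    rwa [div_self (hfpos p0 x0).ne', Real.log_one, abs_zero] at h
  have hlog : ∀ (p q : P) (xx : 𝒳), Real.log (f p xx) - Real.log (f q xx) ≤ M := by
    intro p q xx
    have h := hM p q xx
    rw [Real.log_div (hfpos p xx).ne' (hfpos q xx).ne'] at h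
    exact (abs_le.mp h).2
  have hdecomp : ∀ (i : Fin n) (p : P), LS p = LSm i p + (-Real.log (f p (x i))) := by
    intro i p
    rw [hLS, hLSm]
    exact (Finset.sum_erase_add _ _ (Finset.mem_univ i)).symm
  -- monotonicity and size bounds for the level sets
  have hmonoPt : ∀ s s', s ≤ s' → Pt s ⊆ Pt s' := by
    intro s s' hss p hp
    rw [hPt] at hp ⊢
    simp only [Finset.mem_filter, Finset.mem_univ, true_and] at hp ⊢
    linarith
  have hgmem : ∀ s : ℝ, 0 ≤ s → g ∈ Pt s := by
    intro s hs
    rw [hPt]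
    simp only [Finset.mem_filter, Finset.mem_univ, true_and]
    linarith
  have hcard1 : ∀ s : ℝ, 0 ≤ s → 1 ≤ (Pt s).card := fun s hs =>
    Finset.card_pos.mpr ⟨g, hgmem s hs⟩
  have hcardC : ∀ s : ℝ, (Pt s).card ≤ Fintype.card P := by
    intro s
    rw [hPt]
    exact (Finset.card_filter_le _ _).trans (le_of_eq Finset.card_univ)
  -- the sandwich inclusions hold for every tolerance t
  have hsand : ∀ (t : ℝ) (i : Fin n), Pt (t - M) ⊆ Pti t i ∧ Pti t i ⊆ Pt (t + M) := by
    intro t i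
    constructor
    · intro p hp
      rw [hPt] at hp; rw [hPti]
      simp only [Finset.mem_filter, Finset.mem_univ, true_and] at hp ⊢
      have h1 := hdecomp i p
      have h2 := hdecomp i (gm i)
      have h3 := hg (gm i)
      have h4 := hlog p (gm i) (x i)
      linarith
    · intro p hp
      rw [hPti] at hp; rw [hPt]
      simp only [Finset.mem_filter, Finset.mem_univ, true_and] at hp ⊢
      have h1 := hdecomp i p
      have h2 := hdecomp i g
      have h3 := hgm i g
      have h4 := hlog g p (x i)
      linarith
  -- the counting function on the grid
  set d : ℕ → ℕ := fun j => (Pt ((j : ℝ) * M)).card with hd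
  have hd1 : ∀ j, 1 ≤ d j := fun j => hcard1 _ (by positivity)
  have hdC : ∀ j, d j ≤ Fintype.card P := fun j => hcardC _
  have hdmono : ∀ j j', j ≤ j' → d j ≤ d j' := by
    intro j j' h
    exact Finset.card_le_card (hmonoPt _ _ (by
      have : (j : ℝ) ≤ (j' : ℝ) := by exact_mod_cast h
      nlinarith))
  have hcastm : ∀ k : ℕ, 1 ≤ k → (k : ℝ) * M - M = ((k - 1 : ℕ) : ℝ) * M := by
    intro k hk
    push_cast [Nat.cast_sub hk]
    ring
  have hcastp : ∀ k : ℕ, (k : ℝ) * M + M = ((k + 1 : ℕ) : ℝ) * M := by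
    intro k
    push_cast
    ring
  set B := (Finset.Icc 1 N).filter (fun k : ℕ =>
      2 * ((Pt ((k : ℝ) * M - M)).card : ℝ) < ((Pt ((k : ℝ) * M + M)).card : ℝ)) with hB
  have hBmem : ∀ k ∈ B, 1 ≤ k ∧ 2 * d (k - 1) < d (k + 1) := by
    intro k hk
    rw [hB, Finset.mem_filter, Finset.mem_Icc] at hk
    obtain ⟨⟨hk1, _⟩, hk2⟩ := hk
    refine ⟨hk1, ?_⟩
    rw [hcastm k hk1, hcastp k] at hk2
    exact_mod_cast hk2
  -- bound the number of bad tolerances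
  have hClog : (0 : ℝ) < Real.log (Fintype.card P) := by
    apply Real.log_pos
    exact_mod_cast hP
  have hpow : ∀ B' : Finset ℕ, B' ⊆ B → (∀ a ∈ B', ∀ b ∈ B', a % 2 = b % 2) →
      (B'.card : ℝ) * Real.log 2 ≤ Real.log (Fintype.card P) := by
    intro B' hsub hpar
    have h2C : 2 ^ B'.card ≤ Fintype.card P := by
      rcases B'.eq_empty_or_nonempty with he | hne
      · rw [he]; simpa using Nat.one_le_iff_ne_zero.mpr hPpos.ne'
      · exact (density_levelset_growth_aux d hdmono hd1 B'.card B' rfl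
          (fun a ha => hBmem a (hsub ha)) hpar hne).trans (hdC _)
    have h2C' : (2 : ℝ) ^ B'.card ≤ (Fintype.card P : ℝ) := by exact_mod_cast h2C
    calc (B'.card : ℝ) * Real.log 2 = Real.log ((2 : ℝ) ^ B'.card) := (Real.log_pow _ _).symm
      _ ≤ Real.log (Fintype.card P) := Real.log_le_log (by positivity) h2C'
  have hsplit : B.card = (B.filter (fun k => k % 2 = 0)).card
      + (B.filter (fun k => ¬ k % 2 = 0)).card :=
    (Finset.card_filter_add_card_filter_not _).symm
  have he := hpow (B.filter (fun k => k % 2 = 0)) (Finset.filter_subset _ _)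
    (by intro a ha b hb
        rw [Finset.mem_filter] at ha hb
        omega)
  have ho := hpow (B.filter (fun k => ¬ k % 2 = 0)) (Finset.filter_subset _ _)
    (by intro a ha b hb
        rw [Finset.mem_filter] at ha hb
        omega)
  have hBsum : (B.card : ℝ) * Real.log 2 ≤ 2 * Real.log (Fintype.card P) := by
    rw [hsplit]
    push_cast
    linarith
  have hlog2 : (0.6931471803 : ℝ) < Real.log 2 := Real.log_two_gt_d9
  have hlogC2 : Real.log 2 ≤ Real.log (Fintype.card P) :=
    Real.log_le_log (by norm_num) (by exact_mod_cast hP)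
  have hBbound : (B.card : ℝ) ≤ 3 * Real.log (Fintype.card P) := by
    nlinarith [hBsum, hlog2, hlogC2, hClog]
  refine ⟨hBbound, ?_⟩
  -- identify the good set with the complement of B in the grid
  have hGood : (Finset.Icc 1 N).filter (fun k : ℕ =>
        ((Pt ((k : ℝ) * M + M)).card : ℝ) ≤ 2 * ((Pt ((k : ℝ) * M - M)).card : ℝ) ∧
        ∀ i : Fin n, Pt ((k : ℝ) * M - M) ⊆ Pti ((k : ℝ) * M) i ∧
          Pti ((k : ℝ) * M) i ⊆ Pt ((k : ℝ) * M + M))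
      = (Finset.Icc 1 N).filter (fun k : ℕ =>
        ¬ (2 * ((Pt ((k : ℝ) * M - M)).card : ℝ) < ((Pt ((k : ℝ) * M + M)).card : ℝ))) := by
    apply Finset.filter_congr
    intro k _
    constructor
    · intro ⟨h1, _⟩
      exact not_lt.mpr h1
    · intro h
      exact ⟨not_lt.mp h, fun i => hsand ((k : ℝ) * M) i⟩
  rw [hGood]
  have hcardeq : ((Finset.Icc 1 N).filter (fun k : ℕ =>
        ¬ (2 * ((Pt ((k : ℝ) * M - M)).card : ℝ) < ((Pt ((k : ℝ) * M + M)).card : ℝ)))).card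
      = N - B.card := by
    have := Finset.card_filter_add_card_filter_not (s := Finset.Icc 1 N)
      (p := fun k : ℕ =>
        2 * ((Pt ((k : ℝ) * M - M)).card : ℝ) < ((Pt ((k : ℝ) * M + M)).card : ℝ))
    rw [Nat.card_Icc, ← hB] at this
    omega
  rw [hcardeq]
  have hBle : B.card ≤ N := by
    have := Finset.card_le_card (Finset.filter_subset _ _ : B ⊆ Finset.Icc 1 N)
    rwa [Nat.card_Icc, Nat.add_sub_cancel] at this
  have hNge : 12 * Real.log (Fintype.card P) ≤ (N : ℝ) := by
    rw [hN]
    exact Nat.le_ceil _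
  have : ((N - B.card : ℕ) : ℝ) = (N : ℝ) - (B.card : ℝ) := by
    push_cast [Nat.cast_sub hBle]
    ring
  rw [this]
  linarith
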